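/- Database effectiveness odds: let E_1 be the event that exactly one member of the database D (of size n) bears Γ, and let S denote that unique member. Then P(S=C | E_1, Γ_C=1) / P(S≠C | E_1, Γ_C=1) = (1/(np)) · P(C∈D | Γ_C=1) / P(C∉D | Γ_C=1). -/

import Mathlib

open MeasureTheory ProbabilityTheory
open scoped ENNReal

/-- Database effectiveness odds: if `E₁` is the event that exactly one database member
bears `Γ` and `S` denotes that unique member, then
`P(S=C | E₁, I) / P(S≠C | E₁, I) = (1/(np)) · P(C∈D | I) / P(C∉D | I)`. -/
theorem island_database_effectiveness
    {Ω : Type*} [MeasurableSpace Ω] (μ : Measure Ω) [IsProbabilityMeasure μ]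
    (N : ℕ) (C : Ω → Fin (N + 1)) (hC : Measurable C)
    (Γ : Fin (N + 1) → Ω → Bool) (hΓ : ∀ x, Measurable (Γ x))
    (p : ℝ≥0∞) (hp0 : p ≠ 0) (hp1 : p < 1)
    (hiid : iIndepFun Γ μ)
    (hBer : ∀ x, μ {ω | Γ x ω = true} = p)
    (hind : IndepFun C (fun ω x => Γ x ω) μ)
    (n : ℕ) (hn0 : 0 < n) (hn : n ≤ N + 1)
    (hαpos : ∀ i : Fin (N + 1), μ[|{ω | Γ (C ω) ω = true}] {ω | C ω = i} ≠ 0)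
    (E1 : Set Ω)
    (hE1 : E1 = {ω | (Finset.univ.filter
        (fun i : Fin (N + 1) => (i : ℕ) < n ∧ Γ i ω = true)).card = 1})
    (S : Ω → Fin (N + 1)) (hS : Measurable S)
    (hSdef : ∀ ω ∈ E1, (S ω : ℕ) < n ∧ Γ (S ω) ω = true)
    (hpos : μ (E1 ∩ {ω | Γ (C ω) ω = true}) ≠ 0)
    (hposI : μ {ω | Γ (C ω) ω = true} ≠ 0) :
    μ[|E1 ∩ {ω | Γ (C ω) ω = true}] {ω | S ω = C ω}
        / μ[|E1 ∩ {ω | Γ (C ω) ω = true}] {ω | S ω ≠ C ω}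
      = (1 / (n * p))
        * (μ[|{ω | Γ (C ω) ω = true}] {ω | (C ω : ℕ) < n}
            / μ[|{ω | Γ (C ω) ω = true}] {ω | ¬ (C ω : ℕ) < n}) := by
  classical
  -- notation
  set G : Set Ω := {ω | Γ (C ω) ω = true} with hG
  set D : Finset (Fin (N + 1)) := Finset.univ.filter (fun i => (i : ℕ) < n) with hDdef
  have hmemD : ∀ i : Fin (N + 1), i ∈ D ↔ (i : ℕ) < n := by
    intro i; simp [hDdef]
  have hDcard : D.card = n := by
    have : D = Finset.univ.map (Fin.castLEEmb hn) := by
      ext i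
      simp only [hmemD, Finset.mem_map, Finset.mem_univ, true_and]
      constructor
      · intro h; exact ⟨⟨(i : ℕ), h⟩, by ext; simp [Fin.castLEEmb]⟩
      · rintro ⟨j, rfl⟩; simpa [Fin.castLEEmb] using j.isLt
    rw [this, Finset.card_map, Finset.card_univ, Fintype.card_fin]
  set q : ℝ≥0∞ := 1 - p with hqdef
  have hple : p ≤ 1 := hp1.le
  have hptop : p ≠ ∞ := (hple.trans_lt (by norm_num)).ne
  have hq0 : q ≠ 0 := by
    simp only [hqdef, ne_eq, tsub_eq_zero_iff_le, not_le]; exact hp1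
  have hqtop : q ≠ ∞ := by
    have : q ≤ 1 := tsub_le_self
    exact (this.trans_lt (by norm_num)).ne
  have hqval : ∀ x, μ {ω | Γ x ω = false} = q := by
    intro x
    have hc : {ω | Γ x ω = false} = {ω | Γ x ω = true}ᶜ := by
      ext ω; simp [Bool.not_eq_true]
    have hm : MeasurableSet {ω | Γ x ω = true} := hΓ x (measurableSet_singleton true)
    rw [hc, prob_compl_eq_one_sub hm, hBer]
  have hval : ∀ (x) (b : Bool), μ {ω | Γ x ω = b} = if b then p else q := by
    intro x b; cases b <;> simp [hBer, hqval]
  -- measurability facts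
  have hmC : ∀ i : Fin (N+1), MeasurableSet {ω | C ω = i} := fun i =>
    hC (measurableSet_singleton i)
  have hmΓ : ∀ (j : Fin (N+1)) (b : Bool), MeasurableSet {ω | Γ j ω = b} := fun j b =>
    (hΓ j) (measurableSet_singleton b)
  have hmPat : ∀ (s : Finset (Fin (N+1))) (b : Fin (N+1) → Bool),
      MeasurableSet (⋂ j ∈ s, {ω | Γ j ω = b j}) := by
    intro s b
    exact MeasurableSet.biInter s.countable_toSet (fun j _ => hmΓ j (b j))
  -- product rule for patterns
  have pat : ∀ (s : Finset (Fin (N+1))) (b : Fin (N+1) → Bool),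
      μ (⋂ j ∈ s, {ω | Γ j ω = b j}) = ∏ j ∈ s, μ {ω | Γ j ω = b j} := by
    intro s b
    refine hiid.meas_biInter (fun j _ => ?_)
    refine ⟨{b j}, measurableSet_singleton _, ?_⟩
    ext ω; simp
  -- value of an "exactly k" pattern on a finset s ∋ k
  have patval : ∀ (s : Finset (Fin (N+1))) (k) (_ : k ∈ s) (b : Fin (N+1) → Bool),
      (∀ j ∈ s, b j = decide (j = k)) →
      μ (⋂ j ∈ s, {ω | Γ j ω = b j}) = p * q ^ (s.card - 1) := by
    intro s k hk b hb
    rw [pat]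
    have h1 : ∀ j ∈ s, μ {ω | Γ j ω = b j} = if j = k then p else q := by
      intro j hj
      rw [hval, hb j hj]
      by_cases h : j = k <;> simp [h]
    rw [Finset.prod_congr rfl h1, ← Finset.mul_prod_erase _ _ hk, if_pos rfl]
    congr 1
    rw [Finset.prod_congr rfl (fun j hj => if_neg (Finset.ne_of_mem_erase hj)),
      Finset.prod_const, Finset.card_erase_of_mem hk]
  -- independence of C and Γ-patterns
  have hCpat : ∀ (i : Fin (N+1)) (s : Finset (Fin (N+1))) (b : Fin (N+1) → Bool),
      μ ({ω | C ω = i} ∩ ⋂ j ∈ s, {ω | Γ j ω = b j})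
        = μ {ω | C ω = i} * μ (⋂ j ∈ s, {ω | Γ j ω = b j}) := by
    intro i s b
    have h1 : {ω | C ω = i} = C ⁻¹' {i} := by ext ω; simp
    have h2 : (⋂ j ∈ s, {ω | Γ j ω = b j})
        = (fun ω (x : Fin (N+1)) => Γ x ω) ⁻¹' (⋂ j ∈ s, {f | f j = b j}) := by
      ext ω; simp
    have ht : MeasurableSet (⋂ j ∈ s, {f : Fin (N+1) → Bool | f j = b j}) := by
      refine MeasurableSet.biInter s.countable_toSet (fun j _ => ?_)
      have he : {f : Fin (N+1) → Bool | f j = b j}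
          = (fun f : Fin (N+1) → Bool => f j) ⁻¹' {b j} := rfl
      rw [he]
      exact measurable_pi_apply j (measurableSet_singleton (b j))
    rw [h1, h2]
    exact hind.measure_inter_preimage_eq_mul _ _ (measurableSet_singleton i) ht
  -- structure of E1
  have hFsingle : ∀ (ω : Ω) (k), k ∈ D →
      ((∀ j ∈ D, Γ j ω = decide (j = k)) ↔
        (Finset.univ.filter (fun i : Fin (N + 1) => (i : ℕ) < n ∧ Γ i ω = true)) = {k}) := by
    intro ω k hkD
    have hkn : (k : ℕ) < n := (hmemD k).1 hkD
    constructor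
    · intro h
      ext j
      simp only [Finset.mem_filter, Finset.mem_univ, true_and, Finset.mem_singleton]
      constructor
      · rintro ⟨hjn, hjΓ⟩
        have := h j ((hmemD j).2 hjn)
        rw [hjΓ] at this
        exact of_decide_eq_true this.symm
      · rintro rfl
        refine ⟨hkn, ?_⟩
        have := h j ((hmemD j).2 hkn)
        simpa using this
    · intro h j hjD
      have hjn : (j : ℕ) < n := (hmemD j).1 hjD
      by_cases hjk : j = k
      · subst hjk
        have : j ∈ Finset.univ.filter (fun i : Fin (N + 1) => (i : ℕ) < n ∧ Γ i ω = true) := by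
          rw [h]; exact Finset.mem_singleton_self j
        simp only [Finset.mem_filter, Finset.mem_univ, true_and] at this
        simp [this.2]
      · have hnot : j ∉ Finset.univ.filter (fun i : Fin (N + 1) => (i : ℕ) < n ∧ Γ i ω = true) := by
          rw [h]; simp [hjk]
        simp only [Finset.mem_filter, Finset.mem_univ, true_and, not_and] at hnot
        have := hnot hjn
        simp [hjk, this]
  have hcard_iff : ∀ ω : Ω, ω ∈ E1 ↔ ∃ k ∈ D,
      (Finset.univ.filter (fun i : Fin (N + 1) => (i : ℕ) < n ∧ Γ i ω = true)) = {k} := by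
    intro ω
    rw [hE1]
    simp only [Set.mem_setOf_eq, Finset.card_eq_one]
    constructor
    · rintro ⟨k, hk⟩
      refine ⟨k, ?_, hk⟩
      have : k ∈ Finset.univ.filter (fun i : Fin (N + 1) => (i : ℕ) < n ∧ Γ i ω = true) := by
        rw [hk]; exact Finset.mem_singleton_self k
      simp only [Finset.mem_filter, Finset.mem_univ, true_and] at this
      exact (hmemD k).2 this.1
    · rintro ⟨k, _, hk⟩; exact ⟨k, hk⟩
  have hE1i : ∀ i ∈ D, E1 ∩ {ω | Γ i ω = true} = ⋂ j ∈ D, {ω | Γ j ω = decide (j = i)} := by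
    intro i hiD
    ext ω
    simp only [Set.mem_inter_iff, Set.mem_setOf_eq, Set.mem_iInter]
    constructor
    · rintro ⟨hωE, hωΓ⟩
      rcases (hcard_iff ω).1 hωE with ⟨k, hkD, hk⟩
      have hiF : i ∈ Finset.univ.filter (fun j : Fin (N + 1) => (j : ℕ) < n ∧ Γ j ω = true) := by
        simp only [Finset.mem_filter, Finset.mem_univ, true_and]
        exact ⟨(hmemD i).1 hiD, hωΓ⟩
      rw [hk, Finset.mem_singleton] at hiF
      subst hiF
      exact fun j hj => (hFsingle ω i hiD).2 hk j hj
    · intro h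
      have hpat : ∀ j ∈ D, Γ j ω = decide (j = i) := h
      have hF := (hFsingle ω i hiD).1 hpat
      refine ⟨(hcard_iff ω).2 ⟨i, hiD, hF⟩, ?_⟩
      simpa using hpat i hiD
  have hE1u : E1 = ⋃ k ∈ D, ⋂ j ∈ D, {ω | Γ j ω = decide (j = k)} := by
    ext ω
    simp only [Set.mem_iUnion, Set.mem_iInter, Set.mem_setOf_eq]
    rw [hcard_iff]
    constructor
    · rintro ⟨k, hkD, hk⟩
      exact ⟨k, hkD, (hFsingle ω k hkD).2 hk⟩
    · rintro ⟨k, hkD, hk⟩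
      exact ⟨k, hkD, (hFsingle ω k hkD).1 hk⟩
  have hE1out : ∀ i ∉ D, E1 ∩ {ω | Γ i ω = true}
      = ⋃ k ∈ D, ⋂ j ∈ insert i D, {ω | Γ j ω = (decide (j = k) || decide (j = i))} := by
    intro i hiD
    ext ω
    simp only [Set.mem_inter_iff, Set.mem_setOf_eq, Set.mem_iUnion, Set.mem_iInter,
      Finset.mem_insert]
    constructor
    · rintro ⟨hωE, hωΓ⟩
      rcases (hcard_iff ω).1 hωE with ⟨k, hkD, hk⟩
      refine ⟨k, hkD, ?_⟩
      rintro j (rfl | hjD)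
      · simp [hωΓ]
      · have hji : j ≠ i := fun h => hiD (h ▸ hjD)
        have := (hFsingle ω k hkD).2 hk j hjD
        simp [hji, this]
    · rintro ⟨k, hkD, hk⟩
      have hΓi : Γ i ω = true := by simpa using hk i (Or.inl rfl)
      refine ⟨(hcard_iff ω).2 ⟨k, hkD, ?_⟩, hΓi⟩
      refine (hFsingle ω k hkD).1 (fun j hjD => ?_)
      have hji : j ≠ i := fun h => hiD (h ▸ hjD)
      have := hk j (Or.inr hjD)
      simpa [hji] using this
  have hmE1 : MeasurableSet E1 := by
    rw [hE1u]; exact MeasurableSet.biUnion D.countable_toSet (fun k _ => hmPat _ _)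
  have hmG : MeasurableSet G := by
    have : G = ⋃ i, ({ω | C ω = i} ∩ {ω | Γ i ω = true}) := by
      ext ω; simp only [Set.mem_iUnion, Set.mem_inter_iff, Set.mem_setOf_eq, hG]
      constructor
      · intro h; exact ⟨C ω, rfl, h⟩
      · rintro ⟨i, hi, h⟩; rw [hi]; exact h
    rw [this]; exact MeasurableSet.iUnion (fun i => (hmC i).inter (hmΓ i true))
  -- S coincides with C exactly when C is in the database
  have hSunique : ∀ ω ∈ E1 ∩ G, ((C ω : ℕ) < n ↔ S ω = C ω) := by
    rintro ω ⟨hωE, hωG⟩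
    constructor
    · intro hlt
      have hE1' := hE1 ▸ hωE
      rw [Set.mem_setOf_eq, Finset.card_eq_one] at hE1'
      rcases hE1' with ⟨a, ha⟩
      have hCF : C ω ∈ Finset.univ.filter
          (fun j : Fin (N + 1) => (j : ℕ) < n ∧ Γ j ω = true) := by
        simp only [Finset.mem_filter, Finset.mem_univ, true_and]; exact ⟨hlt, hωG⟩
      have hSF : S ω ∈ Finset.univ.filter
          (fun j : Fin (N + 1) => (j : ℕ) < n ∧ Γ j ω = true) := by
        simp only [Finset.mem_filter, Finset.mem_univ, true_and]; exact hSdef ω hωE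
      rw [ha, Finset.mem_singleton] at hCF hSF
      rw [hSF, hCF]
    · intro h
      rw [← h]
      exact (hSdef ω hωE).1
  have hset1 : E1 ∩ G ∩ {ω | S ω = C ω} = E1 ∩ G ∩ {ω | (C ω : ℕ) < n} := by
    ext ω
    simp only [Set.mem_inter_iff, Set.mem_setOf_eq, and_congr_right_iff]
    intro h1
    exact (hSunique ω h1).symm
  have hset2 : E1 ∩ G ∩ {ω | S ω ≠ C ω} = E1 ∩ G ∩ {ω | ¬ (C ω : ℕ) < n} := by
    ext ω
    simp only [Set.mem_inter_iff, Set.mem_setOf_eq, and_congr_right_iff, ne_eq]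
    intro h1
    rw [not_iff_not]
    exact (hSunique ω h1).symm
  -- decomposition over the value of C
  have hdecomp : ∀ (B : Set Ω), MeasurableSet B → ∀ (s : Finset (Fin (N+1))),
      μ (B ∩ {ω | C ω ∈ s}) = ∑ i ∈ s, μ (B ∩ {ω | C ω = i}) := by
    intro B hB s
    have hu : B ∩ {ω | C ω ∈ s} = ⋃ i ∈ s, (B ∩ {ω | C ω = i}) := by
      ext ω
      simp only [Set.mem_inter_iff, Set.mem_setOf_eq, Set.mem_iUnion]
      constructor
      · rintro ⟨hb, hc⟩; exact ⟨C ω, hc, hb, rfl⟩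
      · rintro ⟨i, hi, hb, hc⟩; exact ⟨hb, hc ▸ hi⟩
    rw [hu, measure_biUnion_finset]
    · intro i hi j hj hij
      simp only [Function.onFun, Set.disjoint_left]
      rintro ω ⟨_, hωi⟩ ⟨_, hωj⟩
      exact hij (hωi ▸ hωj ▸ rfl)
    · exact fun i _ => hB.inter (hmC i)
  -- key measure values
  have key1 : ∀ i ∈ D, μ (E1 ∩ G ∩ {ω | C ω = i})
      = μ {ω | C ω = i} * (p * q ^ (n - 1)) := by
    intro i hiD
    have hseteq : E1 ∩ G ∩ {ω | C ω = i}
        = {ω | C ω = i} ∩ ⋂ j ∈ D, {ω | Γ j ω = decide (j = i)} := by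
      rw [← hE1i i hiD]
      ext ω
      simp only [Set.mem_inter_iff, Set.mem_setOf_eq, hG]
      constructor
      · rintro ⟨⟨h1, h2⟩, h3⟩; exact ⟨h3, h1, h3 ▸ h2⟩
      · rintro ⟨h3, h1, h2⟩; exact ⟨⟨h1, h3 ▸ h2⟩, h3⟩
    rw [hseteq, hCpat, patval D i hiD _ (fun j _ => rfl), hDcard]
  have key2 : ∀ i ∉ D, μ (E1 ∩ G ∩ {ω | C ω = i})
      = μ {ω | C ω = i} * ((n : ℝ≥0∞) * (p * (p * q ^ (n - 1)))) := by
    intro i hiD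
    have hseteq : E1 ∩ G ∩ {ω | C ω = i}
        = ⋃ k ∈ D, ({ω | C ω = i}
            ∩ ⋂ j ∈ insert i D, {ω | Γ j ω = (decide (j = k) || decide (j = i))}) := by
      have h0 : E1 ∩ G ∩ {ω | C ω = i}
          = {ω | C ω = i} ∩ (E1 ∩ {ω | Γ i ω = true}) := by
        ext ω
        simp only [Set.mem_inter_iff, Set.mem_setOf_eq, hG]
        constructor
        · rintro ⟨⟨h1, h2⟩, h3⟩; exact ⟨h3, h1, h3 ▸ h2⟩
        · rintro ⟨h3, h1, h2⟩; exact ⟨⟨h1, h3 ▸ h2⟩, h3⟩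
      rw [h0, hE1out i hiD, Set.inter_iUnion₂]
    have hQval : ∀ k ∈ D,
        μ (⋂ j ∈ insert i D, {ω | Γ j ω = (decide (j = k) || decide (j = i))})
          = p * (p * q ^ (n - 1)) := by
      intro k hkD
      rw [pat, Finset.prod_insert (by simpa using hiD)]
      have hbi : (decide (i = k) || decide (i = i)) = true := by simp
      rw [hbi, hBer]
      congr 1
      have hprod : ∏ j ∈ D, μ {ω | Γ j ω = (decide (j = k) || decide (j = i))}
          = μ (⋂ j ∈ D, {ω | Γ j ω = (decide (j = k) || decide (j = i))}) := (pat _ _).symm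
      rw [hprod, patval D k hkD _ (fun j hjD => ?_), hDcard]
      have hji : j ≠ i := fun h => hiD (h ▸ hjD)
      simp [hji]
    rw [hseteq, measure_biUnion_finset]
    · have hterm : ∀ k ∈ D,
          μ ({ω | C ω = i}
            ∩ ⋂ j ∈ insert i D, {ω | Γ j ω = (decide (j = k) || decide (j = i))})
            = μ {ω | C ω = i} * (p * (p * q ^ (n - 1))) := by
        intro k hkD
        rw [hCpat, hQval k hkD]
      rw [Finset.sum_congr rfl hterm, Finset.sum_const, hDcard, nsmul_eq_mul]
      ring
    · intro k hk l hl hkl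
      simp only [Function.onFun, Set.disjoint_left]
      rintro ω ⟨-, hω1⟩ ⟨-, hω2⟩
      simp only [Set.mem_iInter, Set.mem_setOf_eq] at hω1 hω2
      have h1 := hω1 k (Finset.mem_insert_of_mem hk)
      have h2 := hω2 k (Finset.mem_insert_of_mem hk)
      have hki : k ≠ i := fun h => hiD (h ▸ hk)
      rw [h1] at h2
      simp [hkl, hki] at h2
    · intro k _
      exact (hmC i).inter (hmPat _ _)
  have keyG : ∀ i, μ (G ∩ {ω | C ω = i}) = μ {ω | C ω = i} * p := by
    intro i
    have hseteq : G ∩ {ω | C ω = i}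
        = {ω | C ω = i} ∩ ⋂ j ∈ ({i} : Finset (Fin (N+1))), {ω | Γ j ω = true} := by
      ext ω
      simp only [Set.mem_inter_iff, Set.mem_setOf_eq, hG, Set.mem_iInter,
        Finset.mem_singleton]
      constructor
      · rintro ⟨h1, h2⟩; exact ⟨h2, fun j hj => by rw [hj, ← h2]; exact h1⟩
      · rintro ⟨h2, h1⟩; exact ⟨h2 ▸ h1 i rfl, h2⟩
    rw [hseteq, hCpat]
    congr 1
    have : (⋂ j ∈ ({i} : Finset (Fin (N+1))), {ω | Γ j ω = true})
        = {ω | Γ i ω = true} := by simp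
    rw [this, hBer]
  -- sums
  set M1 : ℝ≥0∞ := ∑ i ∈ D, μ {ω | C ω = i} with hM1def
  set M2 : ℝ≥0∞ := ∑ i ∈ Dᶜ, μ {ω | C ω = i} with hM2def
  have hsetD : {ω | (C ω : ℕ) < n} = {ω | C ω ∈ D} := by
    ext ω; simp [hmemD]
  have hsetDc : {ω | ¬ (C ω : ℕ) < n} = {ω | C ω ∈ Dᶜ} := by
    ext ω; simp [hmemD]
  have hnum : μ (E1 ∩ G ∩ {ω | (C ω : ℕ) < n}) = (p * q ^ (n - 1)) * M1 := by
    rw [hsetD, hdecomp _ (hmE1.inter hmG) D, Finset.sum_congr rfl key1, hM1def,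
      Finset.mul_sum]
    exact Finset.sum_congr rfl (fun i _ => by ring)
  have hden : μ (E1 ∩ G ∩ {ω | ¬ (C ω : ℕ) < n})
      = ((n : ℝ≥0∞) * (p * (p * q ^ (n - 1)))) * M2 := by
    rw [hsetDc, hdecomp _ (hmE1.inter hmG) Dᶜ,
      Finset.sum_congr rfl (fun i hi => key2 i (Finset.mem_compl.1 hi)), hM2def,
      Finset.mul_sum]
    exact Finset.sum_congr rfl (fun i _ => by ring)
  have hGnum : μ (G ∩ {ω | (C ω : ℕ) < n}) = p * M1 := by
    rw [hsetD, hdecomp _ hmG D, Finset.sum_congr rfl (fun i _ => keyG i), hM1def,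
      Finset.mul_sum]
    exact Finset.sum_congr rfl (fun i _ => by ring)
  have hGden : μ (G ∩ {ω | ¬ (C ω : ℕ) < n}) = p * M2 := by
    rw [hsetDc, hdecomp _ hmG Dᶜ, Finset.sum_congr rfl (fun i _ => keyG i), hM2def,
      Finset.mul_sum]
    exact Finset.sum_congr rfl (fun i _ => by ring)
  -- final arithmetic
  have hmA : MeasurableSet (E1 ∩ G) := hmE1.inter hmG
  rw [cond_apply hmA, cond_apply hmA, cond_apply hmG, cond_apply hmG]
  have e1 : E1 ∩ G ∩ {ω | S ω = C ω} = E1 ∩ G ∩ {ω | (C ω : ℕ) < n} := hset1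
  have e2 : E1 ∩ G ∩ {ω | S ω ≠ C ω} = E1 ∩ G ∩ {ω | ¬ (C ω : ℕ) < n} := hset2
  rw [e1, e2, hnum, hden, hGnum, hGden]
  have hiA0 : (μ (E1 ∩ G))⁻¹ ≠ 0 := ENNReal.inv_ne_zero.2 (measure_ne_top μ _)
  have hiAtop : (μ (E1 ∩ G))⁻¹ ≠ ∞ := ENNReal.inv_ne_top.2 hpos
  have hiG0 : (μ G)⁻¹ ≠ 0 := ENNReal.inv_ne_zero.2 (measure_ne_top μ _)
  have hiGtop : (μ G)⁻¹ ≠ ∞ := ENNReal.inv_ne_top.2 hposI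
  rw [ENNReal.mul_div_mul_left _ _ hiA0 hiAtop, ENNReal.mul_div_mul_left _ _ hiG0 hiGtop,
    ENNReal.mul_div_mul_left _ _ hp0 hptop]
  have hr0 : p * q ^ (n - 1) ≠ 0 := mul_ne_zero hp0 (pow_ne_zero _ hq0)
  have hrtop : p * q ^ (n - 1) ≠ ∞ := ENNReal.mul_ne_top hptop (ENNReal.pow_ne_top hqtop)
  have hden2 : ((n : ℝ≥0∞) * (p * (p * q ^ (n - 1)))) * M2
      = (p * q ^ (n - 1)) * (((n : ℝ≥0∞) * p) * M2) := by ring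
  rw [hden2, ENNReal.mul_div_mul_left _ _ hr0 hrtop]
  have hnp0 : (n : ℝ≥0∞) * p ≠ 0 :=
    mul_ne_zero (Nat.cast_ne_zero.2 hn0.ne') hp0
  have hnptop : (n : ℝ≥0∞) * p ≠ ∞ := ENNReal.mul_ne_top (ENNReal.natCast_ne_top n) hptop
  rw [one_div, div_eq_mul_inv, div_eq_mul_inv,
    ENNReal.mul_inv (Or.inl hnp0) (Or.inl hnptop)]
  ring
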